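/- In Dinitz' algorithm with pruning: let f be a flow in the bipartite flow network G, let g be a blocking flow in the level graph L(f), let h = f + g, and let f' be obtained from h by pruning (so that H(f') is a forest and a subgraph of H(h)). Then for every edge (v,w) of the residual graph G(f'), the level ℓ(w) of w in L(f) is at most ℓ(v) + 1. -/

import Mathlib

open scoped Classical

/-- Vertices of the four-layer network: source, providers `P`, consumers `R`, sink. -/
abbrev Vtx (P R : Type*) := (Unit ⊕ P) ⊕ (R ⊕ Unit)

variable {P R : Type*}

def sVx : Vtx P R := Sum.inl (Sum.inl ())
def tVx : Vtx P R := Sum.inr (Sum.inr ())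
def pVx (p : P) : Vtx P R := Sum.inl (Sum.inr p)
def rVx (r : R) : Vtx P R := Sum.inr (Sum.inl r)

section
variable [Fintype P] [Fintype R] (E : P → R → Prop) (s : P → ℝ) (d : R → ℝ)

/-- A flow in the network: nonnegative, supported on edges of the bipartite graph `E`,
respecting the supply capacities of feeder edges and demand capacities of draining edges
(flow conservation at `P` and `R` is implicit: the flow on the feeder edge `(s,p)` is
`∑ r, f p r` and the flow on the draining edge `(r,t)` is `∑ p, f p r`). -/
def IsFlow (f : P → R → ℝ) : Prop :=
  (∀ p r, 0 ≤ f p r) ∧ (∀ p r, f p r ≠ 0 → E p r) ∧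
  (∀ p, ∑ r, f p r ≤ s p) ∧ (∀ r, ∑ p, f p r ≤ d r)

/-- Edges of the residual graph `G(f)`: edges with positive residual capacity. -/
def Res (f : P → R → ℝ) : Vtx P R → Vtx P R → Prop
  | Sum.inl (Sum.inl _), Sum.inl (Sum.inr p) => ∑ r, f p r < s p
  | Sum.inl (Sum.inr p), Sum.inl (Sum.inl _) => 0 < ∑ r, f p r
  | Sum.inl (Sum.inr p), Sum.inr (Sum.inl r) => E p r
  | Sum.inr (Sum.inl r), Sum.inl (Sum.inr p) => 0 < f p r
  | Sum.inr (Sum.inl r), Sum.inr (Sum.inr _) => ∑ p, f p r < d r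
  | Sum.inr (Sum.inr _), Sum.inr (Sum.inl r) => 0 < ∑ p, f p r
  | _, _ => False

end

/-- `ReachIn Rel m u v`: there is a directed walk of length `m` from `u` to `v`. -/
def ReachIn {α : Type*} (Rel : α → α → Prop) : ℕ → α → α → Prop
  | 0 => fun u v => u = v
  | n + 1 => fun u v => ∃ w, Rel u w ∧ ReachIn Rel n w v

/-- BFS distance (level) from `src` to `v` in a directed graph, valued in `ℕ∞`. -/
noncomputable def lvl {α : Type*} (Rel : α → α → Prop) (src v : α) : ℕ∞ :=
  sInf {n : ℕ∞ | ∃ m : ℕ, ReachIn Rel m src v ∧ n = (m : ℕ∞)}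

section
variable [Fintype P] [Fintype R] (E : P → R → Prop) (s : P → ℝ) (d : R → ℝ)

/-- Edges of the level graph `L(f)`: residual edges `(u,v)` with `ℓ(v) = ℓ(u) + 1`. -/
def LevelEdge (f : P → R → ℝ) (u v : Vtx P R) : Prop :=
  Res E s d f u v ∧ lvl (Res E s d f) sVx v = lvl (Res E s d f) sVx u + 1

/-- The edge `(u,v)` of the level graph is saturated by the augmentation `g`
(with respect to the base flow `f`): a feeder edge is saturated if the new feeder flow
equals the supply, a backward edge `(r,p)` if the new flow on `(p,r)` is zero, a draining
edge if the new draining flow equals the demand; forward edges (infinite capacity) are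
never saturated. -/
def Saturated (f g : P → R → ℝ) : Vtx P R → Vtx P R → Prop
  | Sum.inl (Sum.inl _), Sum.inl (Sum.inr p) => ∑ r, (f p r + g p r) = s p
  | Sum.inr (Sum.inl r), Sum.inl (Sum.inr p) => f p r + g p r = 0
  | Sum.inr (Sum.inl r), Sum.inr (Sum.inr _) => ∑ p, (f p r + g p r) = d r
  | _, _ => False

/-- `g` is a blocking flow in the level graph `L(f)` (recorded as the signed change on
the pairs `P × R`; positive values use forward level edges, negative values use backward
level edges): the augmented function `f + g` is again a flow, and every path from `s` to
`t` in `L(f)` contains an edge saturated by `g`. -/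
def IsBlocking (f g : P → R → ℝ) : Prop :=
  (∀ p r, 0 < g p r → LevelEdge E s d f (pVx p) (rVx r)) ∧
  (∀ p r, g p r < 0 → LevelEdge E s d f (rVx r) (pVx p)) ∧
  (∀ p, 0 ≤ ∑ r, g p r) ∧ (∀ r, 0 ≤ ∑ p, g p r) ∧
  (∀ p, 0 < ∑ r, g p r → LevelEdge E s d f sVx (pVx p)) ∧
  (∀ r, 0 < ∑ p, g p r → LevelEdge E s d f (rVx r) tVx) ∧
  IsFlow E s d (fun p r => f p r + g p r) ∧
  (∀ l : List (Vtx P R), l.Chain' (LevelEdge E s d f) →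
    l.head? = some sVx → l.getLast? = some tVx →
    ∃ uv ∈ l.zip l.tail, Saturated s d f g uv.1 uv.2)

end

/-- The undirected support graph `H(f)` on `P ⊕ R`: an edge between `p` and `r`
whenever `f p r > 0`. -/
def suppGraph {P R : Type*} (f : P → R → ℝ) : SimpleGraph (P ⊕ R) :=
  SimpleGraph.fromRel (fun x y =>
    match x, y with
    | Sum.inl p, Sum.inr r => 0 < f p r
    | _, _ => False)

/-- `f'` is obtained from `h` by pruning (repeatedly cancelling flow around cycles of the
support graph): `f'` is nonnegative, has the same feeder and draining flows as `h` (hence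
the same value), is supported on the support of `h`, and its support graph is a forest. -/
def Pruned {P R : Type*} [Fintype P] [Fintype R] (h f' : P → R → ℝ) : Prop :=
  (∀ p r, 0 ≤ f' p r) ∧
  (∀ p, ∑ r, f' p r = ∑ r, h p r) ∧ (∀ r, ∑ p, f' p r = ∑ p, h p r) ∧
  (∀ p r, f' p r ≠ 0 → h p r ≠ 0) ∧
  (suppGraph f').IsAcyclic

lemma reachIn_snoc {α : Type*} {Rel : α → α → Prop} :
    ∀ {m : ℕ} {u v w : α}, ReachIn Rel m u v → Rel v w → ReachIn Rel (m + 1) u w := by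
  intro m
  induction m with
  | zero => intro u v w h hvw; cases h; exact ⟨w, hvw, rfl⟩
  | succ n ih => rintro u v w ⟨x, hux, hx⟩ hvw; exact ⟨x, hux, ih hx hvw⟩

lemma lvl_le {α : Type*} {Rel : α → α → Prop} {src v : α} {m : ℕ}
    (h : ReachIn Rel m src v) : lvl Rel src v ≤ (m : ℕ∞) :=
  sInf_le ⟨m, h, rfl⟩

lemma lvl_step {α : Type*} {Rel : α → α → Prop} {src v w : α} (h : Rel v w) :
    lvl Rel src w ≤ lvl Rel src v + 1 := by
  by_cases hne : {n : ℕ∞ | ∃ m : ℕ, ReachIn Rel m src v ∧ n = (m : ℕ∞)}.Nonempty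
  · obtain ⟨m, hm, heq⟩ := csInf_mem hne
    have h1 : lvl Rel src w ≤ (m : ℕ∞) + 1 := by
      have := lvl_le (reachIn_snoc hm h)
      simpa [Nat.cast_add] using this
    calc lvl Rel src w ≤ (m : ℕ∞) + 1 := h1
      _ = lvl Rel src v + 1 := by rw [lvl, heq]
  · have htop : lvl Rel src v = ⊤ := by
      rw [lvl, Set.not_nonempty_iff_eq_empty.mp hne, sInf_empty]
    simp [htop]

/-- One phase of Dinitz' algorithm with pruning: if `f` is a flow, `g` a blocking flow in
the level graph `L(f)`, and `f'` is obtained from `h = f + g` by pruning, then for every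
edge `(v,w)` of the residual graph `G(f')`, the level of `w` in `L(f)` is at most the
level of `v` plus one. -/
theorem stmt11 {P R : Type*} [Fintype P] [Fintype R]
    (E : P → R → Prop) (s : P → ℝ) (d : R → ℝ)
    (f g f' : P → R → ℝ)
    (hf : IsFlow E s d f)
    (hg : IsBlocking E s d f g)
    (hprune : Pruned (fun p r => f p r + g p r) f') :
    ∀ u v : Vtx P R, Res E s d f' u v →
      lvl (Res E s d f) sVx v ≤ lvl (Res E s d f) sVx u + 1 := by
  obtain ⟨hf0, hfE, hfs, hfd⟩ := hf
  obtain ⟨hg1, hg2, hg3, hg4, hg5, hg6, hgflow, -⟩ := hg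
  obtain ⟨hp0, hps, hpd, hpsupp, -⟩ := hprune
  rintro ((⟨⟩ | p) | (r | ⟨⟩)) ((⟨⟩ | p') | (r' | ⟨⟩)) hres
  · exact absurd hres not_false
  · -- s → p'
    refine lvl_step (show Res E s d f sVx (pVx p') from ?_)
    show ∑ r, f p' r < s p'
    have h1 : ∑ r, f p' r ≤ ∑ r, (f p' r + g p' r) := by
      rw [Finset.sum_add_distrib]
      exact le_add_of_nonneg_right (hg3 p')
    calc ∑ r, f p' r ≤ ∑ r, (f p' r + g p' r) := h1
      _ = ∑ r, f' p' r := (hps p').symm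
      _ < s p' := hres
  · exact absurd hres not_false
  · exact absurd hres not_false
  · -- p → s
    exact le_trans (lvl_le (m := 0) (Rel := Res E s d f) rfl) zero_le
  · exact absurd hres not_false
  · -- p → r'
    exact lvl_step (show Res E s d f (pVx p) (rVx r') from hres)
  · exact absurd hres not_false
  · exact absurd hres not_false
  · -- r → p' : 0 < f' p' r
    have hres' : (0 : ℝ) < f' p' r := hres
    have hhne : f p' r + g p' r ≠ 0 := hpsupp p' r (ne_of_gt hres')
    have hhpos : 0 < f p' r + g p' r := lt_of_le_of_ne (hgflow.1 p' r) (Ne.symm hhne)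
    by_cases hfp : 0 < f p' r
    · exact lvl_step (show Res E s d f (rVx r) (pVx p') from hfp)
    · have hfz : f p' r = 0 := le_antisymm (le_of_not_gt hfp) (hf0 p' r)
      have hgpos : 0 < g p' r := by linarith
      have hle := (hg1 p' r hgpos).2
      show lvl (Res E s d f) sVx (pVx p') ≤ lvl (Res E s d f) sVx (rVx r) + 1
      rw [hle, add_assoc]
      exact le_self_add
  · exact absurd hres not_false
  · -- r → t
    refine lvl_step (show Res E s d f (rVx r) tVx from ?_)
    show ∑ p, f p r < d r
    have h1 : ∑ p, f p r ≤ ∑ p, (f p r + g p r) := by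
      rw [Finset.sum_add_distrib]
      exact le_add_of_nonneg_right (hg4 r)
    calc ∑ p, f p r ≤ ∑ p, (f p r + g p r) := h1
      _ = ∑ p, f' p r := (hpd r).symm
      _ < d r := hres
  · exact absurd hres not_false
  · exact absurd hres not_false
  · -- t → r'
    have hres' : (0 : ℝ) < ∑ p, f' p r' := hres
    have hsum : ∑ p, f' p r' = ∑ p, f p r' + ∑ p, g p r' := by
      rw [hpd r', Finset.sum_add_distrib]
    by_cases hfp : 0 < ∑ p, f p r'
    · exact lvl_step (show Res E s d f tVx (rVx r') from hfp)
    · have hfz : ∑ p, f p r' = 0 := le_antisymm (le_of_not_gt hfp)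
        (Finset.sum_nonneg fun p _ => hf0 p r')
      have hgpos : 0 < ∑ p, g p r' := by
        rw [hsum, hfz, zero_add] at hres'; exact hres'
      have hle := (hg6 r' hgpos).2
      show lvl (Res E s d f) sVx (rVx r') ≤ lvl (Res E s d f) sVx tVx + 1
      rw [hle, add_assoc]
      exact le_self_add
  · exact absurd hres not_false
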